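/- In a locally finitely presentable category, a cocone of monomorphisms (c_i : D_i ↪ C) over a filtered diagram D of monomorphisms is a colimit cocone of D if and only if the identity on C is the supremum of the subobjects c_i (i.e. the cocone is a union). -/

import Mathlib

open CategoryTheory Limits Opposite Function

universe w v u

/-- An object is finitely presentable if its hom-functor preserves filtered colimits. -/
def IsFinitelyPresentable {C : Type u} [Category.{v} C] (A : C) : Prop :=
  ∀ (J : Type v) [SmallCategory J] [IsFiltered J] (Dg : J ⥤ C) (cc : Cocone Dg),
    Nonempty (IsColimit cc) → Nonempty (IsColimit ((coyoneda.obj (op A)).mapCocone cc))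

/-- A diagram of monomorphisms. -/
def MonoDiagram {C : Type u} [Category.{v} C] {J : Type*} [Category J] (Dg : J ⥤ C) : Prop :=
  ∀ ⦃i j : J⦄ (f : i ⟶ j), Mono (Dg.map f)

/-- A locally finitely presentable category. -/
def IsLFP (C : Type u) [Category.{v} C] : Prop :=
  HasColimits C ∧
  (∃ (ι : Type v) (G : ι → C), (∀ i, _root_.IsFinitelyPresentable (G i)) ∧
    ∀ X : C, _root_.IsFinitelyPresentable X → ∃ i, Nonempty (X ≅ G i)) ∧
  ∀ X : C, ∃ (J : Type v) (_ : SmallCategory J) (_ : IsFiltered J) (Dg : J ⥤ C)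
    (cc : Cocone Dg), (∀ j, _root_.IsFinitelyPresentable (Dg.obj j)) ∧ Nonempty (IsColimit cc) ∧
    Nonempty (cc.pt ≅ X)

/-- In an lfp category, a cocone of monomorphisms over a filtered diagram of monomorphisms
is a colimit cocone iff it is a union, i.e. the identity on the cocone point is the
supremum of the subobjects given by the cocone legs. -/
theorem stmt_0 {C : Type u} [Category.{v} C] (hC : IsLFP C)
    {J : Type v} [SmallCategory J] [IsFiltered J] (Dg : J ⥤ C) (hD : MonoDiagram Dg)
    (cc : Cocone Dg) (hmono : ∀ j : J, Mono (cc.ι.app j)) :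
    Nonempty (IsColimit cc) ↔
      ∀ s : Subobject cc.pt,
        (∀ j : J, @Subobject.mk C _ cc.pt (Dg.obj j) (cc.ι.app j) (hmono j) ≤ s) → s = ⊤ := by
  constructor
  · rintro ⟨ht⟩ s hs
    have hf : ∀ j, s.Factors (cc.ι.app j) := fun j => by
      haveI := hmono j
      exact Subobject.factors_of_le _ (hs j) (Subobject.mk_factors_self _)
    let d : Cocone Dg :=
      { pt := (s : C)
        ι :=
          { app := fun j => s.factorThru (cc.ι.app j) (hf j)
            naturality := fun i j f => by
              rw [← cancel_mono s.arrow]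
              simp [Subobject.factorThru_arrow] } }
    have hsplit : ht.desc d ≫ s.arrow = 𝟙 cc.pt := by
      apply ht.hom_ext
      intro j
      simp [d, Subobject.factorThru_arrow]
    haveI : IsSplitEpi s.arrow := ⟨⟨⟨ht.desc d, hsplit⟩⟩⟩
    haveI : IsIso s.arrow := isIso_of_mono_of_isSplitEpi _
    exact (Subobject.isIso_arrow_iff_eq_top s).mp inferInstance
  · intro hs
    obtain ⟨hcolim, -, hpres⟩ := hC
    haveI : HasColimits C := hcolim
    set φ : colimit Dg ⟶ cc.pt := (colimit.isColimit Dg).desc cc with hφ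
    have hfac : ∀ j, colimit.ι Dg j ≫ φ = cc.ι.app j := fun j =>
      (colimit.isColimit Dg).fac cc j
    -- cancellation against finitely presentable objects
    have hcancel : ∀ (X : C), _root_.IsFinitelyPresentable X →
        ∀ u v : X ⟶ colimit Dg, u ≫ φ = v ≫ φ → u = v := by
      intro X hX u v huv
      obtain ⟨hmc⟩ := hX J Dg (colimit.cocone Dg) ⟨colimit.isColimit Dg⟩
      obtain ⟨j, u', hu'⟩ := Types.jointly_surjective_of_isColimit hmc u
      obtain ⟨k, v', hv'⟩ := Types.jointly_surjective_of_isColimit hmc v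
      have hu' : u' ≫ colimit.ι Dg j = u := hu'
      have hv' : v' ≫ colimit.ι Dg k = v := hv'
      let l := IsFiltered.max j k
      have hu2 : (u' ≫ Dg.map (IsFiltered.leftToMax j k)) ≫ colimit.ι Dg l = u := by
        rw [Category.assoc, colimit.w, hu']
      have hv2 : (v' ≫ Dg.map (IsFiltered.rightToMax j k)) ≫ colimit.ι Dg l = v := by
        rw [Category.assoc, colimit.w, hv']
      haveI := hmono l
      have : (u' ≫ Dg.map (IsFiltered.leftToMax j k)) ≫ cc.ι.app l =
          (v' ≫ Dg.map (IsFiltered.rightToMax j k)) ≫ cc.ι.app l := by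
        rw [← hfac l, ← Category.assoc, ← Category.assoc, hu2, hv2]
        exact huv
      have heq := (cancel_mono (cc.ι.app l)).mp this
      rw [← hu2, ← hv2, heq]
    have hφm : Mono φ := by
      constructor
      intro Z u v huv
      obtain ⟨J', _, _, Dg', cc', hfp, ⟨hc'⟩, ⟨e⟩⟩ := hpres Z
      have : e.hom ≫ u = e.hom ≫ v := by
        apply hc'.hom_ext
        intro i
        have := hcancel (Dg'.obj i) (hfp i) (cc'.ι.app i ≫ e.hom ≫ u)
          (cc'.ι.app i ≫ e.hom ≫ v) (by simp only [Category.assoc, huv])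
        simpa using this
      exact (cancel_epi e.hom).mp this
    haveI := hφm
    have hle : ∀ j, @Subobject.mk C _ cc.pt (Dg.obj j) (cc.ι.app j) (hmono j) ≤
        Subobject.mk φ := fun j => by
      haveI := hmono j
      exact Subobject.mk_le_mk_of_comm (colimit.ι Dg j) (hfac j)
    have htop := hs (Subobject.mk φ) hle
    haveI : IsIso φ := (Subobject.isIso_iff_mk_eq_top φ).mpr htop
    exact ⟨IsColimit.ofPointIso (colimit.isColimit Dg)⟩
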